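/- arXiv:2603.23737 — 2 statements merged into one kernel-verified Lean document; each statement's English description precedes it below -/
import Mathlib

section
/- In the setting of the previous decomposition (y = dᵀQd − tr(ΣQ) + 2x̂ᵀQd a.s. with d independent of F = σ(h), E(d)=0, Σ = E(ddᵀ), γ = E(d dᵀ Q d), δ = var(dᵀQd), E|d|⁴ < ∞, x̂ F-measurable and square-integrable), the expectation of y² satisfies E(y²) = 4E(x̂ᵀQΣQx̂) + 4E(x̂ᵀQγ) + δ, provided x̂ᵀQΣQx̂ and x̂ᵀQγ are integrable. -/
open MeasureTheory ProbabilityTheory Matrix BigOperators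

lemma indep_aux {Ω : Type*} {m0 : MeasurableSpace Ω} {μ : Measure Ω}
    {α β : Type*} [MeasurableSpace α] [MeasurableSpace β]
    {h : Ω → α} {d : Ω → β} (hindep : IndepFun d h μ) {u v : Ω → ℝ}
    (hu : Measurable[MeasurableSpace.comap h inferInstance] u)
    (hv : Measurable[MeasurableSpace.comap d inferInstance] v) :
    IndepFun v u μ := by
  rw [IndepFun_iff_Indep] at hindep ⊢
  exact indep_of_indep_of_le_left
    (indep_of_indep_of_le_right hindep (measurable_iff_comap_le.mp hu))
    (measurable_iff_comap_le.mp hv)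

lemma key_mul {Ω : Type*} {m0 : MeasurableSpace Ω} {μ : Measure Ω}
    {α β : Type*} [MeasurableSpace α] [MeasurableSpace β]
    {h : Ω → α} {d : Ω → β} (hindep : IndepFun d h μ) {u v : Ω → ℝ}
    (hu : Measurable[MeasurableSpace.comap h inferInstance] u)
    (hv : Measurable[MeasurableSpace.comap d inferInstance] v)
    (hui : Integrable u μ) (hvi : Integrable v μ) :
    Integrable (fun ω => u ω * v ω) μ ∧
      ∫ ω, u ω * v ω ∂μ = (∫ ω, u ω ∂μ) * (∫ ω, v ω ∂μ) := by
  have hiv : IndepFun v u μ := indep_aux hindep hu hv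
  have h1 : Integrable (v * u) μ := hiv.integrable_mul hvi hui
  have h2 := hiv.integral_mul_eq_mul_integral hvi.aestronglyMeasurable hui.aestronglyMeasurable
  constructor
  · have h1' : Integrable (fun ω => v ω * u ω) μ := h1
    simpa [mul_comm] using h1'
  · have : (fun ω => u ω * v ω) = v * u := by funext ω; simp [mul_comm]
    rw [this, h2, mul_comm]

lemma comp_memLp {Ω : Type*} {m0 : MeasurableSpace Ω} {μ : Measure Ω} {n : ℕ} {p : ENNReal}
    {f : Ω → Fin n → ℝ} (hf : MemLp f p μ) (i : Fin n) :
    MemLp (fun ω => f ω i) p μ :=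
  hf.of_le ((continuous_apply i).comp_aestronglyMeasurable hf.1)
    (Filter.Eventually.of_forall fun ω => norm_le_pi_norm (f ω) i)

lemma mul_memLp {Ω : Type*} {m0 : MeasurableSpace Ω} {μ : Measure Ω}
    {f g : Ω → ℝ} {p q r : ENNReal} (hf : MemLp f q μ) (hg : MemLp g r μ)
    (hpqr : 1 / p = 1 / q + 1 / r) :
    MemLp (fun ω => f ω * g ω) p μ := by
  haveI : ENNReal.HolderTriple q r p := ⟨by simpa [one_div] using hpqr.symm⟩
  exact hg.smul hf

theorem stmt8 {Ω : Type*} {m0 : MeasurableSpace Ω} (μ : Measure Ω) [IsProbabilityMeasure μ]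
    {p n : ℕ} (h : Ω → Fin p → ℝ) (hh : Measurable h)
    (xhat d : Ω → Fin n → ℝ)
    (hxhat : Measurable[MeasurableSpace.comap h inferInstance] xhat)
    (hxhat2 : MemLp xhat 2 μ)
    (hd : Measurable d) (hindep : IndepFun d h μ)
    (hdmean : ∀ i, ∫ ω, d ω i ∂μ = 0)
    (hd4 : MemLp d 4 μ)
    (Q : Matrix (Fin n) (Fin n) ℝ) (hQ : Q.IsSymm)
    (S : Matrix (Fin n) (Fin n) ℝ) (hS : ∀ i j, S i j = ∫ ω, d ω i * d ω j ∂μ)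
    (γ : Fin n → ℝ) (hγ : ∀ i, γ i = ∫ ω, d ω i * (d ω ⬝ᵥ Q.mulVec (d ω)) ∂μ)
    (δ : ℝ)
    (hδ : δ = (∫ ω, (d ω ⬝ᵥ Q.mulVec (d ω)) ^ 2 ∂μ) - (∫ ω, d ω ⬝ᵥ Q.mulVec (d ω) ∂μ) ^ 2)
    (y : Ω → ℝ)
    (hy : y = fun ω =>
      d ω ⬝ᵥ Q.mulVec (d ω) - (S * Q).trace + 2 * (xhat ω ⬝ᵥ Q.mulVec (d ω)))
    (hint1 : Integrable (fun ω => xhat ω ⬝ᵥ (Q * S * Q).mulVec (xhat ω)) μ)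
    (hint2 : Integrable (fun ω => xhat ω ⬝ᵥ Q.mulVec γ) μ) :
    ∫ ω, (y ω) ^ 2 ∂μ =
      4 * (∫ ω, xhat ω ⬝ᵥ (Q * S * Q).mulVec (xhat ω) ∂μ) +
        4 * (∫ ω, xhat ω ⬝ᵥ Q.mulVec γ ∂μ) + δ := by
  classical
  set A : Ω → ℝ := fun ω => d ω ⬝ᵥ Q.mulVec (d ω) with hA
  set B : Ω → ℝ := fun ω => xhat ω ⬝ᵥ Q.mulVec (d ω) with hB
  set t : ℝ := (S * Q).trace with ht
  -- pointwise expansions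
  have hAeq : A = fun ω => ∑ i, ∑ j, Q i j * (d ω i * d ω j) := by
    funext ω
    simp only [hA, dotProduct, mulVec, Finset.mul_sum]
    exact Finset.sum_congr rfl fun i _ => Finset.sum_congr rfl fun j _ => by ring
  have hBeq : B = fun ω => ∑ i, ∑ k, Q i k * (xhat ω i * d ω k) := by
    funext ω
    simp only [hB, dotProduct, mulVec, Finset.mul_sum]
    exact Finset.sum_congr rfl fun i _ => Finset.sum_congr rfl fun j _ => by ring
  -- measurability
  have mdi : ∀ i : Fin n, Measurable fun ω => d ω i := fun i => (measurable_pi_apply i).comp hd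
  have mXc : ∀ i : Fin n,
      Measurable[MeasurableSpace.comap h inferInstance] fun ω => xhat ω i :=
    fun i => (measurable_pi_apply i).comp hxhat
  have mXc2 : ∀ i j : Fin n,
      Measurable[MeasurableSpace.comap h inferInstance] fun ω => xhat ω i * xhat ω j :=
    fun i j => (mXc i).mul (mXc j)
  have mdc : ∀ i : Fin n,
      Measurable[MeasurableSpace.comap d inferInstance] fun ω => d ω i :=
    fun i => (measurable_pi_apply i).comp (comap_measurable d)
  have mddc : ∀ k l : Fin n,
      Measurable[MeasurableSpace.comap d inferInstance] fun ω => d ω k * d ω l :=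
    fun k l => (mdc k).mul (mdc l)
  have mqf : Measurable fun v : Fin n → ℝ => v ⬝ᵥ Q.mulVec v := by
    simp only [dotProduct, mulVec]
    exact Finset.measurable_sum _ fun i _ => (measurable_pi_apply i).mul
      (Finset.measurable_sum _ fun j _ => measurable_const.mul (measurable_pi_apply j))
  have mAc : Measurable[MeasurableSpace.comap d inferInstance] A :=
    mqf.comp (comap_measurable d)
  have mvc : ∀ k : Fin n,
      Measurable[MeasurableSpace.comap d inferInstance] fun ω => (A ω - t) * d ω k :=
    fun k => (mAc.sub measurable_const).mul (mdc k)
  -- Lp membership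
  have hdi4 : ∀ i, MemLp (fun ω => d ω i) 4 μ := fun i => comp_memLp hd4 i
  have hdi2 : ∀ i, MemLp (fun ω => d ω i) 2 μ := fun i =>
    (hdi4 i).mono_exponent (by norm_num)
  have hxi2 : ∀ i, MemLp (fun ω => xhat ω i) 2 μ := fun i => comp_memLp hxhat2 i
  have hdd2 : ∀ k l, MemLp (fun ω => d ω k * d ω l) 2 μ := fun k l =>
    mul_memLp (hdi4 k) (hdi4 l) (by rw [ENNReal.div_add_div_same, ENNReal.div_eq_div_iff (by norm_num) (by norm_num) (by norm_num) (by norm_num)]; norm_num)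
  have hdd1 : ∀ k l, Integrable (fun ω => d ω k * d ω l) μ := fun k l =>
    (hdd2 k l).integrable one_le_two
  have hxx1 : ∀ i j, Integrable (fun ω => xhat ω i * xhat ω j) μ := fun i j =>
    memLp_one_iff_integrable.mp (mul_memLp (hxi2 i) (hxi2 j) (by rw [ENNReal.div_add_div_same, div_one, eq_comm, ENNReal.div_eq_one_iff (by norm_num) (by norm_num)]; norm_num))
  have hxi1 : ∀ i, Integrable (fun ω => xhat ω i) μ := fun i => (hxi2 i).integrable one_le_two
  have hdi1 : ∀ i, Integrable (fun ω => d ω i) μ := fun i => (hdi2 i).integrable one_le_two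
  have hA2 : MemLp A 2 μ := by
    rw [hAeq]
    exact memLp_finset_sum _ fun i _ => memLp_finset_sum _ fun j _ => (hdd2 i j).const_mul _
  have hA1 : Integrable A μ := hA2.integrable one_le_two
  have hAt2 : MemLp (fun ω => A ω - t) 2 μ := hA2.sub (memLp_const t)
  have hAt2sq : Integrable (fun ω => (A ω - t) ^ 2) μ := hAt2.integrable_sq
  have hAsq : Integrable (fun ω => A ω ^ 2) μ := hA2.integrable_sq
  have hvk1 : ∀ k, Integrable (fun ω => (A ω - t) * d ω k) μ := fun k =>
    memLp_one_iff_integrable.mp (mul_memLp hAt2 (hdi2 k) (by rw [ENNReal.div_add_div_same, div_one, eq_comm, ENNReal.div_eq_one_iff (by norm_num) (by norm_num)]; norm_num))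
  have hdA1 : ∀ k, Integrable (fun ω => d ω k * A ω) μ := fun k =>
    memLp_one_iff_integrable.mp (mul_memLp (hdi2 k) hA2 (by rw [ENNReal.div_add_div_same, div_one, eq_comm, ENNReal.div_eq_one_iff (by norm_num) (by norm_num)]; norm_num))
  -- independence products
  have keyJ2 : ∀ i k : Fin n,
      Integrable (fun ω => xhat ω i * ((A ω - t) * d ω k)) μ ∧
        ∫ ω, xhat ω i * ((A ω - t) * d ω k) ∂μ =
          (∫ ω, xhat ω i ∂μ) * ∫ ω, (A ω - t) * d ω k ∂μ :=
    fun i k => key_mul hindep (mXc i) (mvc k) (hxi1 i) (hvk1 k)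
  have keyJ3 : ∀ i j k l : Fin n,
      Integrable (fun ω => (xhat ω i * xhat ω j) * (d ω k * d ω l)) μ ∧
        ∫ ω, (xhat ω i * xhat ω j) * (d ω k * d ω l) ∂μ =
          (∫ ω, xhat ω i * xhat ω j ∂μ) * ∫ ω, d ω k * d ω l ∂μ :=
    fun i j k l => key_mul hindep (mXc2 i j) (mddc k l) (hxx1 i j) (hdd1 k l)
  -- basic integrals
  have I1 : ∫ ω, A ω ∂μ = t := by
    rw [hAeq,
      integral_finset_sum _ (fun i _ => integrable_finset_sum _ fun j _ => (hdd1 i j).const_mul (Q i j))]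
    have e1 : ∀ i : Fin n, ∫ ω, ∑ j, Q i j * (d ω i * d ω j) ∂μ = ∑ j, Q i j * S i j := by
      intro i
      rw [integral_finset_sum _ (fun j _ => (hdd1 i j).const_mul (Q i j))]
      exact Finset.sum_congr rfl fun j _ => by rw [integral_const_mul, ← hS]
    rw [Finset.sum_congr rfl fun i _ => e1 i, ht]
    simp only [Matrix.trace, Matrix.diag, Matrix.mul_apply]
    exact Finset.sum_congr rfl fun i _ => Finset.sum_congr rfl fun j _ => by
      rw [hQ.apply i j]; ring
  have I2 : ∀ k, ∫ ω, (A ω - t) * d ω k ∂μ = γ k := by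
    intro k
    have e : (fun ω => (A ω - t) * d ω k) = fun ω => d ω k * A ω - t * d ω k := by
      funext ω; ring
    rw [e, integral_sub (hdA1 k) ((hdi1 k).const_mul t), integral_const_mul, hdmean k,
      mul_zero, sub_zero]
    exact (hγ k).symm
  have J1 : ∫ ω, (A ω - t) ^ 2 ∂μ = δ := by
    have hd2 : δ = (∫ ω, A ω ^ 2 ∂μ) - (∫ ω, A ω ∂μ) ^ 2 := hδ
    rw [I1] at hd2
    have e : (fun ω => (A ω - t) ^ 2) = fun ω => A ω ^ 2 - 2 * t * A ω + t ^ 2 := by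
      funext ω; ring
    have iSub : Integrable (fun ω => A ω ^ 2 - 2 * t * A ω) μ :=
      hAsq.sub (hA1.const_mul (2 * t))
    rw [e, integral_add iSub (integrable_const _),
      integral_sub hAsq (hA1.const_mul (2 * t)), integral_const_mul, I1, integral_const]
    simp only [measure_univ, probReal_univ, ENNReal.toReal_one, smul_eq_mul, one_mul]
    rw [hd2]; ring
  have eAB : (fun ω => (A ω - t) * B ω)
      = fun ω => ∑ i, ∑ k, Q i k * (xhat ω i * ((A ω - t) * d ω k)) := by
    funext ω
    simp only [hBeq, Finset.mul_sum]
    exact Finset.sum_congr rfl fun i _ => Finset.sum_congr rfl fun k _ => by ring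
  have J2 : ∫ ω, (A ω - t) * B ω ∂μ = ∫ ω, xhat ω ⬝ᵥ Q.mulVec γ ∂μ := by
    rw [eAB, integral_finset_sum _
      (fun i _ => integrable_finset_sum _ fun k _ => ((keyJ2 i k).1.const_mul (Q i k)))]
    have lhs : ∀ i : Fin n, ∫ ω, ∑ k, Q i k * (xhat ω i * ((A ω - t) * d ω k)) ∂μ
        = ∑ k, Q i k * ((∫ ω, xhat ω i ∂μ) * γ k) := by
      intro i
      rw [integral_finset_sum _ (fun k _ => (keyJ2 i k).1.const_mul (Q i k))]
      exact Finset.sum_congr rfl fun k _ => by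
        rw [integral_const_mul, (keyJ2 i k).2, I2 k]
    rw [Finset.sum_congr rfl fun i _ => lhs i]
    have e2 : (fun ω => xhat ω ⬝ᵥ Q.mulVec γ)
        = fun ω => ∑ i, ∑ k, Q i k * γ k * xhat ω i := by
      funext ω
      simp only [dotProduct, mulVec, Finset.mul_sum]
      exact Finset.sum_congr rfl fun i _ => Finset.sum_congr rfl fun k _ => by ring
    rw [e2, integral_finset_sum _
      (fun i _ => integrable_finset_sum _ fun k _ => (hxi1 i).const_mul (Q i k * γ k))]
    refine Finset.sum_congr rfl fun i _ => ?_
    rw [integral_finset_sum _ (fun k _ => (hxi1 i).const_mul (Q i k * γ k))]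
    exact Finset.sum_congr rfl fun k _ => by rw [integral_const_mul]; ring
  have hBpair : B = fun ω => ∑ q : Fin n × Fin n, Q q.1 q.2 * (xhat ω q.1 * d ω q.2) := by
    funext ω
    rw [hBeq]
    exact (Fintype.sum_prod_type
      (f := fun q : Fin n × Fin n => Q q.1 q.2 * (xhat ω q.1 * d ω q.2))).symm
  have eB2 : (fun ω => B ω ^ 2) = fun ω => ∑ q : Fin n × Fin n, ∑ r : Fin n × Fin n,
      Q q.1 q.2 * Q r.1 r.2 * (xhat ω q.1 * xhat ω r.1 * (d ω q.2 * d ω r.2)) := by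
    funext ω
    simp only [hBpair, pow_two, Finset.sum_mul_sum]
    exact Finset.sum_congr rfl fun q _ => Finset.sum_congr rfl fun r _ => by ring
  have J3 : ∫ ω, B ω ^ 2 ∂μ = ∫ ω, xhat ω ⬝ᵥ (Q * S * Q).mulVec (xhat ω) ∂μ := by
    rw [eB2, integral_finset_sum _
      (fun q _ => integrable_finset_sum _ fun r _ => ((keyJ3 q.1 r.1 q.2 r.2).1.const_mul (Q q.1 q.2 * Q r.1 r.2)))]
    have lhs : ∀ q : Fin n × Fin n,
        ∫ ω, ∑ r : Fin n × Fin n,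
          Q q.1 q.2 * Q r.1 r.2 * (xhat ω q.1 * xhat ω r.1 * (d ω q.2 * d ω r.2)) ∂μ
        = ∑ r : Fin n × Fin n,
          Q q.1 q.2 * Q r.1 r.2 * ((∫ ω, xhat ω q.1 * xhat ω r.1 ∂μ) * S q.2 r.2) := by
      intro q
      rw [integral_finset_sum _ (fun r _ => (keyJ3 q.1 r.1 q.2 r.2).1.const_mul (Q q.1 q.2 * Q r.1 r.2))]
      exact Finset.sum_congr rfl fun r _ => by
        rw [integral_const_mul, (keyJ3 q.1 r.1 q.2 r.2).2, ← hS]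
    rw [Finset.sum_congr rfl fun q _ => lhs q]
    have e3 : (fun ω => xhat ω ⬝ᵥ (Q * S * Q).mulVec (xhat ω))
        = fun ω => ∑ i, ∑ j, (Q * S * Q) i j * (xhat ω i * xhat ω j) := by
      funext ω
      simp only [dotProduct, mulVec, Finset.mul_sum]
      exact Finset.sum_congr rfl fun i _ => Finset.sum_congr rfl fun j _ => by ring
    rw [e3, integral_finset_sum _
      (fun i _ => integrable_finset_sum _ fun j _ => (hxx1 i j).const_mul ((Q * S * Q) i j))]
    have rhs : ∀ i : Fin n, ∫ ω, ∑ j, (Q * S * Q) i j * (xhat ω i * xhat ω j) ∂μ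
        = ∑ j, (Q * S * Q) i j * ∫ ω, xhat ω i * xhat ω j ∂μ := by
      intro i
      rw [integral_finset_sum _ (fun j _ => (hxx1 i j).const_mul ((Q * S * Q) i j))]
      exact Finset.sum_congr rfl fun j _ => by rw [integral_const_mul]
    rw [Finset.sum_congr rfl fun i _ => rhs i]
    -- combinatorial identity
    simp only [Fintype.sum_prod_type, Matrix.mul_apply, Finset.sum_mul]
    refine Finset.sum_congr rfl fun i _ => ?_
    rw [Finset.sum_comm]
    refine Finset.sum_congr rfl fun j _ => ?_
    rw [Finset.sum_comm]
    refine Finset.sum_congr rfl fun l _ => Finset.sum_congr rfl fun k _ => ?_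
    rw [hQ.apply l j]
    ring
  have IAB : Integrable (fun ω => (A ω - t) * B ω) μ := by
    rw [eAB]
    exact integrable_finset_sum _ fun i _ =>
      integrable_finset_sum _ fun k _ => (keyJ2 i k).1.const_mul _
  have IB2 : Integrable (fun ω => B ω ^ 2) μ := by
    rw [eB2]
    exact integrable_finset_sum _ fun q _ =>
      integrable_finset_sum _ fun r _ => (keyJ3 q.1 r.1 q.2 r.2).1.const_mul _
  have hy2 : ∀ ω, (y ω) ^ 2 = (A ω - t) ^ 2 + (4 * ((A ω - t) * B ω) + 4 * B ω ^ 2) := by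
    intro ω; rw [hy]; simp only [hA, hB, ht]; ring
  calc ∫ ω, (y ω) ^ 2 ∂μ
      = ∫ ω, ((A ω - t) ^ 2 + (4 * ((A ω - t) * B ω) + 4 * B ω ^ 2)) ∂μ := by
        exact integral_congr_ae (Filter.Eventually.of_forall hy2)
    _ = (∫ ω, (A ω - t) ^ 2 ∂μ) +
        ((∫ ω, 4 * ((A ω - t) * B ω) ∂μ) + ∫ ω, 4 * B ω ^ 2 ∂μ) := by
        have i4 : Integrable (fun ω => 4 * ((A ω - t) * B ω) + 4 * B ω ^ 2) μ :=
          (IAB.const_mul 4).add (IB2.const_mul 4)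
        rw [integral_add hAt2sq i4]
        congr 1
        exact integral_add (IAB.const_mul 4) (IB2.const_mul 4)
    _ = δ + (4 * (∫ ω, xhat ω ⬝ᵥ Q.mulVec γ ∂μ) +
        4 * (∫ ω, xhat ω ⬝ᵥ (Q * S * Q).mulVec (xhat ω) ∂μ)) := by
        rw [integral_const_mul, integral_const_mul, J1, J2, J3]
    _ = _ := by ring
end

section
/- Let F = σ(h), let v be an F-measurable square-integrable R^n-valued random vector, and let d be an R^n-valued random vector independent of h with E(d) = 0, E|d|⁴ < ∞, Σ := E(ddᵀ), γ := E(d(dᵀQd)) for a symmetric Q ∈ R^{n×n}. Let x̂ be F-measurable and square-integrable, and set y := dᵀQd − tr(ΣQ) + 2x̂ᵀQd. Then for any deterministic matrix M ∈ R^{n×n}, the random variable vᵀ M d · y is integrable and E(vᵀ M d · y) = E(vᵀ M γ) + 2 E(vᵀ M Σ Q x̂). -/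
open MeasureTheory ProbabilityTheory Matrix BigOperators
open scoped ENNReal

lemma aux_mulL2 {Ω : Type*} [MeasurableSpace Ω] {μ : Measure Ω} {f g : Ω → ℝ}
    (hf : MemLp f 2 μ) (hg : MemLp g 2 μ) : Integrable (fun ω => f ω * g ω) μ := by
  have h1 : MemLp (f • g) 1 μ := hg.smul hf (hpqr := ⟨by
    norm_num [ENNReal.inv_two_add_inv_two]⟩)
  have h2 : MemLp (fun ω => f ω * g ω) 1 μ := by
    exact h1
  exact memLp_one_iff_integrable.mp h2

lemma aux_mul44 {Ω : Type*} [MeasurableSpace Ω] {μ : Measure Ω} {f g : Ω → ℝ}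
    (hf : MemLp f 4 μ) (hg : MemLp g 4 μ) : MemLp (fun ω => f ω * g ω) 2 μ := by
  have h1 : MemLp (f • g) 2 μ := hg.smul hf (hpqr := ⟨by
    rw [← one_div, ← one_div (2:ℝ≥0∞), ENNReal.div_add_div_same, show ((1:ℝ≥0∞)+1) = 2 from one_add_one_eq_two,
      show (4:ℝ≥0∞) = 2*2 by norm_num]
    nth_rewrite 1 [show (2:ℝ≥0∞) = 2*1 from (mul_one 2).symm]
    rw [ENNReal.mul_div_mul_left _ _ two_ne_zero ENNReal.ofNat_ne_top]⟩)
  exact h1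

lemma aux_factor {Ω : Type*} {m0 : MeasurableSpace Ω} {μ : Measure Ω} [IsProbabilityMeasure μ]
    {p n : ℕ} {h : Ω → Fin p → ℝ} {d : Ω → Fin n → ℝ}
    (hindep : IndepFun d h μ)
    {f : Ω → ℝ} (hf : Measurable[MeasurableSpace.comap h inferInstance] f) (hfi : Integrable f μ)
    {g : (Fin n → ℝ) → ℝ} (hg : Measurable g) (hgi : Integrable (fun ω => g (d ω)) μ) :
    Integrable (fun ω => f ω * g (d ω)) μ ∧
      ∫ ω, f ω * g (d ω) ∂μ = (∫ ω, f ω ∂μ) * ∫ ω, g (d ω) ∂μ := by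
  have hgm : Measurable[MeasurableSpace.comap d inferInstance] (fun ω => g (d ω)) :=
    hg.comp (measurable_iff_comap_le.mpr le_rfl)
  have hi : IndepFun f (fun ω => g (d ω)) μ := by
    rw [IndepFun_iff] at hindep ⊢
    intro t1 t2 ht1 ht2
    rw [Set.inter_comm, hindep t2 t1 (measurable_iff_comap_le.mp hgm t2 ht2)
      (measurable_iff_comap_le.mp hf t1 ht1), mul_comm]
  refine ⟨hi.integrable_mul hfi hgi, ?_⟩
  exact hi.integral_fun_mul_eq_mul_integral hfi.1 hgi.1

lemma aux_dot_meas {n : ℕ} (Q : Matrix (Fin n) (Fin n) ℝ) :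
    Measurable (fun x : Fin n → ℝ => x ⬝ᵥ Q.mulVec x) := by
  simp only [dotProduct, Matrix.mulVec]
  exact Finset.measurable_sum _ fun k _ => (measurable_pi_apply k).mul
    (Finset.measurable_sum _ fun l _ => measurable_const.mul (measurable_pi_apply l))

lemma aux_expand {n : ℕ} (M Q : Matrix (Fin n) (Fin n) ℝ) (a b c e : Fin n → ℝ) :
    (a ⬝ᵥ M.mulVec c) * (b ⬝ᵥ Q.mulVec e) =
      ∑ i, ∑ k, ∑ j, ∑ l, (a i * b k) * ((M i j * Q k l) * (c j * e l)) := by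
  rw [dotProduct, dotProduct, Finset.sum_mul_sum]
  refine Finset.sum_congr rfl fun i _ => Finset.sum_congr rfl fun k _ => ?_
  simp only [Matrix.mulVec, dotProduct]
  rw [Finset.mul_sum, Finset.mul_sum, Finset.sum_mul_sum]
  exact Finset.sum_congr rfl fun j _ => Finset.sum_congr rfl fun l _ => by ring

lemma aux_expand1 {n : ℕ} (M : Matrix (Fin n) (Fin n) ℝ) (a c : Fin n → ℝ) (t : ℝ) :
    (a ⬝ᵥ M.mulVec c) * t = ∑ i, ∑ j, a i * (M i j * (c j * t)) := by
  simp only [dotProduct, Matrix.mulVec, Finset.sum_mul, Finset.mul_sum]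
  exact Finset.sum_congr rfl fun i _ => Finset.sum_congr rfl fun j _ => by ring

theorem stmt10 {Ω : Type*} {m0 : MeasurableSpace Ω} (μ : Measure Ω) [IsProbabilityMeasure μ]
    {p n : ℕ} (h : Ω → Fin p → ℝ) (hh : Measurable h)
    (v xhat : Ω → Fin n → ℝ)
    (hv : Measurable[MeasurableSpace.comap h inferInstance] v)
    (hv2 : MemLp v 2 μ)
    (hxhat : Measurable[MeasurableSpace.comap h inferInstance] xhat)
    (hxhat2 : MemLp xhat 2 μ)
    (d : Ω → Fin n → ℝ) (hd : Measurable d) (hindep : IndepFun d h μ)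
    (hdmean : ∀ i, ∫ ω, d ω i ∂μ = 0) (hd4 : MemLp d 4 μ)
    (Q : Matrix (Fin n) (Fin n) ℝ) (hQ : Q.IsSymm)
    (S : Matrix (Fin n) (Fin n) ℝ) (hS : ∀ i j, S i j = ∫ ω, d ω i * d ω j ∂μ)
    (γ : Fin n → ℝ) (hγ : ∀ i, γ i = ∫ ω, d ω i * (d ω ⬝ᵥ Q.mulVec (d ω)) ∂μ)
    (y : Ω → ℝ)
    (hy : y = fun ω =>
      d ω ⬝ᵥ Q.mulVec (d ω) - (S * Q).trace + 2 * (xhat ω ⬝ᵥ Q.mulVec (d ω)))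
    (M : Matrix (Fin n) (Fin n) ℝ) :
    Integrable (fun ω => (v ω ⬝ᵥ M.mulVec (d ω)) * y ω) μ ∧
      ∫ ω, (v ω ⬝ᵥ M.mulVec (d ω)) * y ω ∂μ =
        (∫ ω, v ω ⬝ᵥ M.mulVec γ ∂μ) +
          2 * ∫ ω, v ω ⬝ᵥ (M * S * Q).mulVec (xhat ω) ∂μ := by
  classical
  have hFle : MeasurableSpace.comap h inferInstance ≤ m0 := measurable_iff_comap_le.mp hh
  -- component measurability / integrability
  have hvm : ∀ i, Measurable[MeasurableSpace.comap h inferInstance] fun ω => v ω i :=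
    fun i => (measurable_pi_apply i).comp hv
  have hxm : ∀ k, Measurable[MeasurableSpace.comap h inferInstance] fun ω => xhat ω k :=
    fun k => (measurable_pi_apply k).comp hxhat
  have hvL2 : ∀ i, MemLp (fun ω => v ω i) 2 μ := fun i =>
    hv2.of_le ((hvm i).mono hFle le_rfl).aestronglyMeasurable
      (ae_of_all _ fun ω => norm_le_pi_norm (v ω) i)
  have hxL2 : ∀ k, MemLp (fun ω => xhat ω k) 2 μ := fun k =>
    hxhat2.of_le ((hxm k).mono hFle le_rfl).aestronglyMeasurable
      (ae_of_all _ fun ω => norm_le_pi_norm (xhat ω) k)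
  have hdL4 : ∀ j, MemLp (fun ω => d ω j) 4 μ := fun j =>
    hd4.of_le ((measurable_pi_apply j).comp hd).aestronglyMeasurable
      (ae_of_all _ fun ω => norm_le_pi_norm (d ω) j)
  have hdL2 : ∀ j, MemLp (fun ω => d ω j) 2 μ := fun j =>
    (hdL4 j).mono_exponent (by norm_num)
  have hvi : ∀ i, Integrable (fun ω => v ω i) μ := fun i => (hvL2 i).integrable one_le_two
  have hvx : ∀ i k, Integrable (fun ω => v ω i * xhat ω k) μ := fun i k =>
    aux_mulL2 (hvL2 i) (hxL2 k)
  have hdi : ∀ j, Integrable (fun ω => d ω j) μ := fun j => (hdL2 j).integrable one_le_two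
  have hddi : ∀ j l, Integrable (fun ω => d ω j * d ω l) μ := fun j l =>
    aux_mulL2 (hdL2 j) (hdL2 l)
  have hQdi : ∀ j, Integrable (fun ω => d ω j * (d ω ⬝ᵥ Q.mulVec (d ω))) μ := by
    intro j
    have heq : (fun ω => d ω j * (d ω ⬝ᵥ Q.mulVec (d ω))) =
        fun ω => ∑ k, ∑ l, Q k l * ((d ω j * d ω k) * d ω l) := by
      funext ω
      simp only [dotProduct, Matrix.mulVec, Finset.mul_sum]
      exact Finset.sum_congr rfl fun k _ => Finset.sum_congr rfl fun l _ => by ring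
    rw [heq]
    refine integrable_finset_sum _ fun k _ => integrable_finset_sum _ fun l _ => ?_
    exact (aux_mulL2 (aux_mul44 (hdL4 j) (hdL4 k)) (hdL2 l)).const_mul _
  -- Part 1
  have key1 : ∀ i j, Integrable (fun ω => v ω i * (M i j * (d ω j * (d ω ⬝ᵥ Q.mulVec (d ω))))) μ ∧
      ∫ ω, v ω i * (M i j * (d ω j * (d ω ⬝ᵥ Q.mulVec (d ω)))) ∂μ =
        (∫ ω, v ω i ∂μ) * (M i j * γ j) := by
    intro i j
    have hg : Measurable (fun x : Fin n → ℝ => M i j * (x j * (x ⬝ᵥ Q.mulVec x))) :=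
      measurable_const.mul ((measurable_pi_apply j).mul (aux_dot_meas Q))
    have hgi : Integrable (fun ω => M i j * (d ω j * (d ω ⬝ᵥ Q.mulVec (d ω)))) μ :=
      (hQdi j).const_mul _
    have hfac := aux_factor hindep (hvm i) (hvi i) hg hgi
    refine ⟨hfac.1, ?_⟩
    rw [hfac.2, integral_const_mul, ← hγ j]
  have hT1eq : (fun ω => (v ω ⬝ᵥ M.mulVec (d ω)) * (d ω ⬝ᵥ Q.mulVec (d ω))) =
      fun ω => ∑ i, ∑ j, v ω i * (M i j * (d ω j * (d ω ⬝ᵥ Q.mulVec (d ω)))) := by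
    funext ω; exact aux_expand1 M (v ω) (d ω) _
  have h1int : Integrable (fun ω => (v ω ⬝ᵥ M.mulVec (d ω)) * (d ω ⬝ᵥ Q.mulVec (d ω))) μ := by
    rw [hT1eq]
    exact integrable_finset_sum _ fun i _ => integrable_finset_sum _ fun j _ => (key1 i j).1
  have h1val : ∫ ω, (v ω ⬝ᵥ M.mulVec (d ω)) * (d ω ⬝ᵥ Q.mulVec (d ω)) ∂μ =
      ∫ ω, v ω ⬝ᵥ M.mulVec γ ∂μ := by
    rw [hT1eq]
    rw [integral_finset_sum _ fun i _ => integrable_finset_sum _ fun j _ => (key1 i j).1]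
    have : ∀ i : Fin n, ∫ ω, ∑ j, v ω i * (M i j * (d ω j * (d ω ⬝ᵥ Q.mulVec (d ω)))) ∂μ =
        ∑ j, (∫ ω, v ω i ∂μ) * (M i j * γ j) := by
      intro i
      rw [integral_finset_sum _ fun j _ => (key1 i j).1]
      exact Finset.sum_congr rfl fun j _ => (key1 i j).2
    rw [Finset.sum_congr rfl fun i _ => this i]
    have hrhs : (fun ω => v ω ⬝ᵥ M.mulVec γ) =
        fun ω => ∑ i, ∑ j, v ω i * (M i j * γ j) := by
      funext ω
      simp only [dotProduct, Matrix.mulVec, Finset.mul_sum]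
    rw [hrhs, integral_finset_sum _ fun i _ => ?_]
    · refine Finset.sum_congr rfl fun i _ => ?_
      rw [integral_finset_sum _ fun j _ => (hvi i).mul_const _]
      exact Finset.sum_congr rfl fun j _ => (integral_mul_const _ _).symm
    · exact integrable_finset_sum _ fun j _ => (hvi i).mul_const _
  -- Part 2
  have key2 : ∀ i j, Integrable (fun ω => v ω i * (M i j * (d ω j * (S * Q).trace))) μ ∧
      ∫ ω, v ω i * (M i j * (d ω j * (S * Q).trace)) ∂μ = 0 := by
    intro i j
    have hg : Measurable (fun x : Fin n → ℝ => M i j * (x j * (S * Q).trace)) :=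
      measurable_const.mul ((measurable_pi_apply j).mul measurable_const)
    have hgi : Integrable (fun ω => M i j * (d ω j * (S * Q).trace)) μ :=
      ((hdi j).mul_const _).const_mul _
    have hfac := aux_factor hindep (hvm i) (hvi i) hg hgi
    refine ⟨hfac.1, ?_⟩
    rw [hfac.2, integral_const_mul, integral_mul_const, hdmean j]
    ring
  have hT2eq : (fun ω => (v ω ⬝ᵥ M.mulVec (d ω)) * (S * Q).trace) =
      fun ω => ∑ i, ∑ j, v ω i * (M i j * (d ω j * (S * Q).trace)) := by
    funext ω; exact aux_expand1 M (v ω) (d ω) _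
  have h2int : Integrable (fun ω => (v ω ⬝ᵥ M.mulVec (d ω)) * (S * Q).trace) μ := by
    rw [hT2eq]
    exact integrable_finset_sum _ fun i _ => integrable_finset_sum _ fun j _ => (key2 i j).1
  have h2val : ∫ ω, (v ω ⬝ᵥ M.mulVec (d ω)) * (S * Q).trace ∂μ = 0 := by
    rw [hT2eq, integral_finset_sum _ fun i _ => integrable_finset_sum _ fun j _ => (key2 i j).1]
    refine Finset.sum_eq_zero fun i _ => ?_
    rw [integral_finset_sum _ fun j _ => (key2 i j).1]
    exact Finset.sum_eq_zero fun j _ => (key2 i j).2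
  -- Part 3
  have key3 : ∀ i k j l,
      Integrable (fun ω => (v ω i * xhat ω k) * ((M i j * Q k l) * (d ω j * d ω l))) μ ∧
      ∫ ω, (v ω i * xhat ω k) * ((M i j * Q k l) * (d ω j * d ω l)) ∂μ =
        (∫ ω, v ω i * xhat ω k ∂μ) * ((M i j * Q k l) * S j l) := by
    intro i k j l
    have hg : Measurable (fun x : Fin n → ℝ => (M i j * Q k l) * (x j * x l)) :=
      measurable_const.mul ((measurable_pi_apply j).mul (measurable_pi_apply l))
    have hgi : Integrable (fun ω => (M i j * Q k l) * (d ω j * d ω l)) μ :=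
      (hddi j l).const_mul _
    have hfac := aux_factor hindep ((hvm i).mul (hxm k)) (hvx i k) hg hgi
    refine ⟨hfac.1, ?_⟩
    simp only [Pi.mul_apply] at hfac; rw [hfac.2, integral_const_mul, hS j l]
  have hT3eq : (fun ω => (v ω ⬝ᵥ M.mulVec (d ω)) * (xhat ω ⬝ᵥ Q.mulVec (d ω))) =
      fun ω => ∑ i, ∑ k, ∑ j, ∑ l,
        (v ω i * xhat ω k) * ((M i j * Q k l) * (d ω j * d ω l)) := by
    funext ω; exact aux_expand M Q (v ω) (xhat ω) (d ω) (d ω)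
  have h3int : Integrable (fun ω => (v ω ⬝ᵥ M.mulVec (d ω)) * (xhat ω ⬝ᵥ Q.mulVec (d ω))) μ := by
    rw [hT3eq]
    exact integrable_finset_sum _ fun i _ => integrable_finset_sum _ fun k _ =>
      integrable_finset_sum _ fun j _ => integrable_finset_sum _ fun l _ => (key3 i k j l).1
  have h3val : ∫ ω, (v ω ⬝ᵥ M.mulVec (d ω)) * (xhat ω ⬝ᵥ Q.mulVec (d ω)) ∂μ =
      ∫ ω, v ω ⬝ᵥ (M * S * Q).mulVec (xhat ω) ∂μ := by
    rw [hT3eq]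
    rw [integral_finset_sum _ fun i _ => integrable_finset_sum _ fun k _ =>
      integrable_finset_sum _ fun j _ => integrable_finset_sum _ fun l _ => (key3 i k j l).1]
    have hin : ∀ i,
        ∫ ω, (∑ k, ∑ j, ∑ l, (v ω i * xhat ω k) * ((M i j * Q k l) * (d ω j * d ω l))) ∂μ
        = ∑ k, ∑ j, ∑ l, (∫ ω, v ω i * xhat ω k ∂μ) * ((M i j * Q k l) * S j l) := by
      intro i
      rw [integral_finset_sum _ fun k _ => integrable_finset_sum _ fun j _ =>
        integrable_finset_sum _ fun l _ => (key3 i k j l).1]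
      refine Finset.sum_congr rfl fun k _ => ?_
      rw [integral_finset_sum _ fun j _ => integrable_finset_sum _ fun l _ => (key3 i k j l).1]
      refine Finset.sum_congr rfl fun j _ => ?_
      rw [integral_finset_sum _ fun l _ => (key3 i k j l).1]
      exact Finset.sum_congr rfl fun l _ => (key3 i k j l).2
    rw [Finset.sum_congr rfl fun i _ => hin i]
    have hmsq : ∀ i k, (M * S * Q) i k = ∑ j, ∑ l, M i j * Q k l * S j l := by
      intro i k
      simp only [Matrix.mul_apply, Finset.sum_mul]
      rw [Finset.sum_comm]
      exact Finset.sum_congr rfl fun j _ => Finset.sum_congr rfl fun l _ => by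
        rw [hQ.apply k l]; ring
    have hrhs : (fun ω => v ω ⬝ᵥ (M * S * Q).mulVec (xhat ω)) =
        fun ω => ∑ i, ∑ k, (M * S * Q) i k * (v ω i * xhat ω k) := by
      funext ω
      simp only [dotProduct, Matrix.mulVec, Finset.mul_sum]
      exact Finset.sum_congr rfl fun i _ => Finset.sum_congr rfl fun k _ => by ring
    rw [hrhs]
    rw [integral_finset_sum _ fun i _ => integrable_finset_sum _ fun k _ =>
      (hvx i k).const_mul ((M * S * Q) i k)]
    refine Finset.sum_congr rfl fun i _ => ?_
    rw [integral_finset_sum _ fun k _ => (hvx i k).const_mul ((M * S * Q) i k)]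
    refine Finset.sum_congr rfl fun k _ => ?_
    rw [integral_const_mul, hmsq i k, Finset.sum_mul]
    refine Finset.sum_congr rfl fun j _ => ?_
    rw [Finset.sum_mul]
    exact Finset.sum_congr rfl fun l _ => by ring
  -- Assembly
  have hTT : (fun ω => (v ω ⬝ᵥ M.mulVec (d ω)) * y ω) =
      fun ω => ((v ω ⬝ᵥ M.mulVec (d ω)) * (d ω ⬝ᵥ Q.mulVec (d ω)) -
        (v ω ⬝ᵥ M.mulVec (d ω)) * (S * Q).trace) +
        2 * ((v ω ⬝ᵥ M.mulVec (d ω)) * (xhat ω ⬝ᵥ Q.mulVec (d ω))) := by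
    funext ω; rw [hy]; ring
  constructor
  · rw [hTT]
    exact (h1int.sub h2int).add (h3int.const_mul 2)
  · rw [hTT]
    have e1 : ∫ ω, ((v ω ⬝ᵥ M.mulVec (d ω)) * (d ω ⬝ᵥ Q.mulVec (d ω)) -
        (v ω ⬝ᵥ M.mulVec (d ω)) * (S * Q).trace) +
        2 * ((v ω ⬝ᵥ M.mulVec (d ω)) * (xhat ω ⬝ᵥ Q.mulVec (d ω))) ∂μ
        = (∫ ω, (v ω ⬝ᵥ M.mulVec (d ω)) * (d ω ⬝ᵥ Q.mulVec (d ω)) -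
            (v ω ⬝ᵥ M.mulVec (d ω)) * (S * Q).trace ∂μ) +
          ∫ ω, 2 * ((v ω ⬝ᵥ M.mulVec (d ω)) * (xhat ω ⬝ᵥ Q.mulVec (d ω))) ∂μ :=
      integral_add (h1int.sub h2int) (h3int.const_mul 2)
    rw [e1, integral_sub h1int h2int, integral_const_mul, h1val, h2val, h3val]
    ring
end
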